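/- arXiv:1601.05884 — 2 statements merged into one kernel-verified Lean document; each statement's English description precedes it below -/
import Mathlib

section
/- Let X be a topological space, Y ⊆ C_p(X) a nonmetrizable compact subspace (with the topology of pointwise convergence), and suppose κ = cof(w(Y)) is uncountable, where w(Y) is the weight of Y. Then κ is not a caliber of X: there exists a κ-indexed decreasing family of nonempty open subsets of X every κ-sized subfamily of which has empty intersection. -/
open Cardinal

universe u

def IsCaliber (X : Type u) [TopologicalSpace X] (κ : Cardinal.{u}) : Prop :=
  ∀ (ι : Type u) (U : ι → Set X), #ι = κ →
    (∀ i, IsOpen (U i) ∧ (U i).Nonempty) →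
    ∃ B : Set ι, #B = κ ∧ (⋂ i ∈ B, U i).Nonempty

/-- The weight of a topological space: the least cardinality of a topological basis. -/
noncomputable def tweight (X : Type u) [TopologicalSpace X] : Cardinal.{u} :=
  ⨅ B : {B : Set (Set X) // TopologicalSpace.IsTopologicalBasis B}, #B.1

section AuxLemmas

open TopologicalSpace Set Filter

lemma tweight_le_of_basis {Z : Type u} [TopologicalSpace Z] {B : Set (Set Z)}
    (hB : IsTopologicalBasis B) : tweight Z ≤ #B :=
  ciInf_le' (fun B : {B : Set (Set Z) // IsTopologicalBasis B} => #B.1) ⟨B, hB⟩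

lemma exists_basis_tweight {Z : Type u} [TopologicalSpace Z] :
    ∃ B : Set (Set Z), IsTopologicalBasis B ∧ #B = tweight Z := by
  have hne : Nonempty {B : Set (Set Z) // IsTopologicalBasis B} :=
    ⟨⟨{U | IsOpen U}, isTopologicalBasis_opens⟩⟩
  have h : tweight Z ∈ Set.range fun B : {B : Set (Set Z) // IsTopologicalBasis B} => #B.1 := by
    rw [tweight, iInf]
    exact csInf_mem (Set.range_nonempty _)
  obtain ⟨⟨B, hB⟩, hBe⟩ := h
  exact ⟨B, hB, hBe⟩

lemma exists_basis_pi (ι : Type u) :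
    ∃ C : Set (Set (ι → ℝ)), IsTopologicalBasis C ∧ #C ≤ max #ι ℵ₀ := by
  classical
  set φ : Finset (ι × ℚ × ℚ) → Set (ι → ℝ) :=
    fun s => ⋂ p ∈ s, (fun x : ι → ℝ => x p.1) ⁻¹' Set.Ioo (p.2.1 : ℝ) (p.2.2 : ℝ) with hφ
  refine ⟨Set.range φ, ?_, ?_⟩
  · refine isTopologicalBasis_of_isOpen_of_nhds ?_ ?_
    · rintro _ ⟨s, rfl⟩
      exact s.finite_toSet.isOpen_biInter fun p _ =>
        isOpen_Ioo.preimage (continuous_apply p.1)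
    · intro a U haU hU
      rw [isOpen_pi_iff] at hU
      obtain ⟨I, u, h1, h2⟩ := hU a haU
      have hch : ∀ i : {x // x ∈ I}, ∃ pq : ℚ × ℚ,
          a i.1 ∈ Set.Ioo (pq.1 : ℝ) pq.2 ∧ Set.Ioo (pq.1 : ℝ) pq.2 ⊆ u i.1 := by
        intro i
        obtain ⟨V, hV, haV, hVu⟩ :=
          Real.isTopologicalBasis_Ioo_rat.exists_subset_of_mem_open (h1 i.1 i.2).2
            (h1 i.1 i.2).1
        simp only [Set.mem_iUnion, Set.mem_singleton_iff] at hV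
        obtain ⟨p, q, _, rfl⟩ := hV
        exact ⟨(p, q), haV, hVu⟩
      choose pq hpq1 hpq2 using hch
      refine ⟨φ (I.attach.image fun i => (i.1, pq i)), ⟨_, rfl⟩, ?_, ?_⟩
      · simp only [hφ, Set.mem_iInter]
        intro p hp
        simp only [Finset.mem_image, Finset.mem_attach, true_and] at hp
        obtain ⟨i, rfl⟩ := hp
        exact hpq1 i
      · refine subset_trans ?_ h2
        intro x hx i hi
        simp only [hφ, Set.mem_iInter] at hx
        exact hpq2 ⟨i, hi⟩ (hx (i, pq ⟨i, hi⟩)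
          (Finset.mem_image.2 ⟨⟨i, hi⟩, Finset.mem_attach _ _, rfl⟩))
  · refine le_trans Cardinal.mk_range_le ?_
    rcases isEmpty_or_nonempty ι with h | h
    · haveI : IsEmpty (ι × ℚ × ℚ) := inferInstance
      haveI := Fintype.ofIsEmpty (α := ι × ℚ × ℚ)
      exact le_trans (Cardinal.lt_aleph0_of_finite _).le (le_max_right _ _)
    · haveI : Infinite (ι × ℚ × ℚ) := inferInstance
      rw [Cardinal.mk_finset_of_infinite]
      have h2 : #(ℚ × ℚ) = ℵ₀ := Cardinal.mk_eq_aleph0 _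
      rw [Cardinal.mk_prod, h2]
      simp only [Cardinal.lift_uzero, Cardinal.lift_aleph0]
      exact (Cardinal.mul_le_max _ _).trans (by simp [max_assoc])

variable {X : Type u} [TopologicalSpace X]

set_option linter.unusedSectionVars false

lemma tweight_le_of_sep {Y : Set (X → ℝ)} (hYcomp : IsCompact Y) {A : Set X}
    (hsep : ∀ f ∈ Y, ∀ g ∈ Y, Set.EqOn f g A → f = g) :
    tweight Y ≤ max #A ℵ₀ := by
  haveI : CompactSpace Y := isCompact_iff_compactSpace.mp hYcomp
  set φ : Y → (A → ℝ) := fun f a => (f : X → ℝ) a with hφ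
  have hcont : Continuous φ :=
    continuous_pi fun a => (continuous_apply (a : X)).comp continuous_subtype_val
  have hinj : Function.Injective φ := by
    intro f g hfg
    apply Subtype.ext
    apply hsep f.1 f.2 g.1 g.2
    intro a ha
    exact congrFun hfg ⟨a, ha⟩
  have hemb := hcont.isClosedEmbedding hinj
  obtain ⟨C, hC, hCcard⟩ := exists_basis_pi (↥A)
  have hbasis := hC.isInducing hemb.toIsEmbedding.toIsInducing
  calc tweight ↥Y ≤ #((Set.preimage φ) '' C) := tweight_le_of_basis hbasis
    _ ≤ #C := Cardinal.mk_image_le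
    _ ≤ _ := hCcard

lemma metrizable_of_tweight_le {Y : Set (X → ℝ)} (hYcomp : IsCompact Y)
    (h : tweight Y ≤ ℵ₀) : TopologicalSpace.MetrizableSpace Y := by
  haveI : CompactSpace ↥Y := isCompact_iff_compactSpace.mp hYcomp
  obtain ⟨B, hB, hBcard⟩ := exists_basis_tweight (Z := ↥Y)
  haveI : SecondCountableTopology ↥Y := hB.secondCountableTopology
    (Set.countable_coe_iff.mp (Cardinal.mk_le_aleph0_iff.mp (hBcard ▸ h)))
  infer_instance

lemma exists_sep_set {Y : Set (X → ℝ)} (hbig : ℵ₀ ≤ tweight Y) :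
    ∃ A : Set X, (∀ f ∈ Y, ∀ g ∈ Y, Set.EqOn f g A → f = g) ∧ #A ≤ tweight Y := by
  classical
  obtain ⟨Bas, hBas, hBcard⟩ := exists_basis_tweight (Z := ↥Y)
  set P := {q : Set ↥Y × Set ↥Y // q.1 ∈ Bas ∧ q.2 ∈ Bas ∧
      ∃ x : X, ∀ u ∈ q.1, ∀ v ∈ q.2, (u : X → ℝ) x ≠ (v : X → ℝ) x} with hP
  have hsel : ∀ q : P, ∃ x : X, ∀ u ∈ q.1.1, ∀ v ∈ q.1.2,
      (u : X → ℝ) x ≠ (v : X → ℝ) x := fun q => q.2.2.2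
  choose sel hsel2 using hsel
  refine ⟨Set.range sel, ?_, ?_⟩
  · have key : ∀ f', f' ∈ Y → ∀ g', g' ∈ Y → Set.EqOn f' g' (Set.range sel) →
        ∀ x₀ : X, f' x₀ < g' x₀ → False := by
      intro f' hf' g' hg' heq' x₀ hlt
      set m := (f' x₀ + g' x₀) / 2 with hm
      have hWo1 : IsOpen {h : ↥Y | (h : X → ℝ) x₀ < m} :=
        isOpen_lt ((continuous_apply x₀).comp continuous_subtype_val) continuous_const
      have hWo2 : IsOpen {h : ↥Y | m < (h : X → ℝ) x₀} :=
        isOpen_lt continuous_const ((continuous_apply x₀).comp continuous_subtype_val)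
      have hfm : (⟨f', hf'⟩ : ↥Y) ∈ {h : ↥Y | (h : X → ℝ) x₀ < m} := by
        simp only [Set.mem_setOf_eq, hm]; linarith
      obtain ⟨B1, hB1, hfB1, hB1sub⟩ := hBas.exists_subset_of_mem_open hfm hWo1
      have hgm : (⟨g', hg'⟩ : ↥Y) ∈ {h : ↥Y | m < (h : X → ℝ) x₀} := by
        simp only [Set.mem_setOf_eq, hm]; linarith
      obtain ⟨B2, hB2, hgB2, hB2sub⟩ := hBas.exists_subset_of_mem_open hgm hWo2
      have hq : ∃ x : X, ∀ u ∈ B1, ∀ v ∈ B2, (u : X → ℝ) x ≠ (v : X → ℝ) x :=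
        ⟨x₀, fun u hu v hv => ne_of_lt (lt_trans (hB1sub hu) (hB2sub hv))⟩
      have := hsel2 ⟨(B1, B2), hB1, hB2, hq⟩ _ hfB1 _ hgB2
      exact this (heq' (Set.mem_range_self _))
    intro f hf g hg heq
    by_contra hne
    have hx : ∃ x₀ : X, f x₀ ≠ g x₀ := by
      by_contra h; push_neg at h; exact hne (funext h)
    obtain ⟨x₀, hx0⟩ := hx
    rcases hx0.lt_or_gt with hlt | hlt
    · exact key f hf g hg heq x₀ hlt
    · exact key g hg f hf heq.symm x₀ hlt
  · have hinj : Function.Injective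
        (fun q : P => ((⟨q.1.1, q.2.1⟩ : ↥Bas), (⟨q.1.2, q.2.2.1⟩ : ↥Bas))) := by
      intro q1 q2 h
      simp only [Prod.ext_iff, Subtype.ext_iff] at h
      exact Subtype.ext (Prod.ext h.1 h.2)
    calc #(Set.range sel) ≤ #P := Cardinal.mk_range_le
      _ ≤ #(↥Bas × ↥Bas) := Cardinal.mk_le_of_injective hinj
      _ = #(↥Bas) * #(↥Bas) := by rw [Cardinal.mk_prod, Cardinal.lift_id]
      _ = #(↥Bas) := Cardinal.mul_eq_self (hBcard ▸ hbig)
      _ ≤ tweight ↥Y := hBcard.le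

noncomputable def tyin {o : Ordinal.{u}} (i : o.ToType) : Ordinal.{u} :=
  @Ordinal.typein o.ToType (· < ·) isWellOrder_lt i

lemma tyin_lt_self {o : Ordinal.{u}} (i : o.ToType) : tyin i < o := by
  have := @Ordinal.typein_lt_type o.ToType (· < ·) isWellOrder_lt i
  rwa [Ordinal.type_toType] at this

lemma mk_seg {o : Ordinal.{u}} (γ : o.ToType) :
    #{i : o.ToType | i < γ} = (tyin γ).card :=
  @Ordinal.card_typein o.ToType (· < ·) isWellOrder_lt γ

lemma tyin_le_tyin {o : Ordinal.{u}} {i j : o.ToType} (h : i ≤ j) : tyin i ≤ tyin j :=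
  (Ordinal.typein_le_typein' o (x := i) (y := j)).mpr h

lemma tyin_lt_tyin {o : Ordinal.{u}} {i j : o.ToType} (h : i < j) : tyin i < tyin j :=
  (@Ordinal.typein_lt_typein o.ToType (· < ·) isWellOrder_lt i j).mpr h

lemma exists_tyin_eq {o : Ordinal.{u}} {c : Ordinal.{u}} (h : c < o) :
    ∃ γ : o.ToType, tyin γ = c := by
  refine ⟨@Ordinal.enum o.ToType (· < ·) isWellOrder_lt
    ⟨c, by rwa [Ordinal.type_toType]⟩, ?_⟩
  exact @Ordinal.typein_enum o.ToType (· < ·) isWellOrder_lt c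
    (by rwa [Ordinal.type_toType])

end AuxLemmas

/-- If `Y ⊆ C_p(X)` is a nonmetrizable compact subspace (pointwise topology, realized as a
compact set of continuous functions inside `X → ℝ` with the product topology) and
`κ = cof (w(Y))` is uncountable, then `κ` is not a caliber of `X`: there is a decreasing
`κ`-indexed family of nonempty open sets every `κ`-sized subfamily of which has empty
intersection. -/
theorem not_caliber_of_nonmetrizable_compact (X : Type u) [TopologicalSpace X]
    (Y : Set (X → ℝ)) (hYcont : ∀ f ∈ Y, Continuous f) (hYcomp : IsCompact Y)
    (hYnm : ¬ TopologicalSpace.MetrizableSpace Y)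
    (κ : Cardinal.{u}) (hκ : κ = (tweight Y).ord.cof) (hunc : Cardinal.aleph0 < κ) :
    (∃ U : κ.ord.ToType → Set X,
      (∀ i, IsOpen (U i) ∧ (U i).Nonempty) ∧ Antitone U ∧
      ∀ B : Set κ.ord.ToType, #B = κ → ⋂ i ∈ B, U i = ∅)
    ∧ ¬ IsCaliber X κ := by
  classical
  set lam := tweight ↥Y with hlam
  have hlam_big : ℵ₀ < lam := by
    by_contra hcon
    push_neg at hcon
    exact hYnm (metrizable_of_tweight_le hYcomp hcon)
  have hcof : κ.ord.cof = κ := by rw [hκ]; exact Ordinal.cof_cof _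
  haveI hone : Nonempty κ.ord.ToType := by
    rw [Ordinal.toType_nonempty_iff_ne_zero]
    intro h0
    rw [Cardinal.ord_eq_zero] at h0
    exact absurd (h0 ▸ hunc) (by simp)
  -- the separating set A
  obtain ⟨A, hsepA, hAcard⟩ := exists_sep_set (X := X) (Y := Y) hlam_big.le
  have hAbig : lam ≤ max #A ℵ₀ := tweight_le_of_sep hYcomp hsepA
  haveI hAne : Nonempty ↥A := by
    rcases isEmpty_or_nonempty ↥A with hA | hA
    · exfalso
      have hz : #↥A = 0 := Cardinal.mk_eq_zero ↥A
      rw [hz] at hAbig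
      simp only [max_eq_right (Cardinal.zero_le _)] at hAbig
      exact absurd (lt_of_lt_of_le hlam_big hAbig) (lt_irrefl _)
    · exact hA
  have hAle : #↥A ≤ #(lam.ord.ToType) := by
    rw [Cardinal.mk_toType, Cardinal.card_ord]; exact hAcard
  obtain ⟨j⟩ := Cardinal.le_def _ _ |>.mp hAle
  set s : lam.ord.ToType → ↥A := Function.invFun j with hs
  have hssurj : Function.Surjective s := Function.invFun_surjective j.injective
  -- unbounded set of size κ
  obtain ⟨S, hSunb, hScard⟩ := Order.exists_cof_eq lam.ord.ToType
  rw [Ordinal.cof_toType] at hScard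
  have hSκ : #↥S = κ := by rw [hScard, ← hκ]
  have hoκ : #(κ.ord.ToType) = κ := by rw [Cardinal.mk_toType, Cardinal.card_ord]
  obtain ⟨e⟩ := Cardinal.eq.mp (hoκ.trans hSκ.symm)
  -- cofinal monotone ordinal-valued function
  set c' : κ.ord.ToType → Ordinal := fun α => ⨆ β : ↥(Set.Iic α), tyin (e β.1).1 + 1 with hc'
  have hseg : ∀ γ : κ.ord.ToType, #{i : κ.ord.ToType | i < γ} < κ := by
    intro γ
    rw [mk_seg, ← Cardinal.lt_ord]
    exact tyin_lt_self γ
  have hc'lt : ∀ α, c' α < lam.ord := by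
    intro α
    apply Ordinal.iSup_lt_ord
    · have h2 : Set.Iic α ⊆ {i : κ.ord.ToType | i < α} ∪ {α} := by
        intro i hi
        rcases lt_or_eq_of_le (Set.mem_Iic.mp hi) with h | h
        · exact Or.inl h
        · exact Or.inr (by simp [h])
      have h3 : #↥(Set.Iic α) < κ := by
        calc #↥(Set.Iic α) ≤ #↥({i : κ.ord.ToType | i < α} ∪ {α}) :=
              Cardinal.mk_le_mk_of_subset h2
          _ ≤ #{i : κ.ord.ToType | i < α} + #({α} : Set κ.ord.ToType) :=
              Cardinal.mk_union_le _ _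
          _ = #{i : κ.ord.ToType | i < α} + 1 := by rw [Cardinal.mk_singleton]
          _ < κ := Cardinal.add_lt_of_lt hunc.le (hseg α) (one_lt_aleph0.trans hunc)
      rw [← hκ]
      exact h3
    · intro β
      rw [Ordinal.add_one_eq_succ]
      exact (Cardinal.isSuccLimit_ord hlam_big.le).succ_lt (tyin_lt_self _)
  have hc'mono : Monotone c' := by
    intro a b hab
    apply Ordinal.iSup_le
    intro β
    exact Ordinal.le_iSup (fun β : ↥(Set.Iic b) => tyin (e β.1).1 + 1)
      ⟨β.1, le_trans β.2 hab⟩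
  have hc'cof : ∀ i : lam.ord.ToType, ∃ α, tyin i < c' α := by
    intro i
    obtain ⟨jS, hjS, hji⟩ := hSunb i
    refine ⟨e.symm ⟨jS, hjS⟩, ?_⟩
    have h1 : tyin i ≤ tyin jS := tyin_le_tyin hji
    have h2 : tyin jS + 1 ≤ c' (e.symm ⟨jS, hjS⟩) := by
      have h3 := Ordinal.le_iSup
        (fun β : ↥(Set.Iic (e.symm ⟨jS, hjS⟩)) => tyin (e β.1).1 + 1)
        ⟨e.symm ⟨jS, hjS⟩, Set.self_mem_Iic⟩
      rwa [Equiv.apply_symm_apply] at h3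
    have h4 : tyin i < tyin jS + 1 :=
      lt_of_le_of_lt h1 (by rw [Ordinal.add_one_eq_succ]; exact Order.lt_succ _)
    exact lt_of_lt_of_le h4 h2
  -- the increasing family of subsets of A
  set AA : κ.ord.ToType → Set X :=
    fun α => Subtype.val '' (s '' {i | tyin i < c' α}) with hAA
  have hAAcard : ∀ α, #↥(AA α) < lam := by
    intro α
    obtain ⟨γ, hγ⟩ := exists_tyin_eq (hc'lt α)
    have h2 : {i : lam.ord.ToType | tyin i < c' α} = {i | i < γ} := by
      ext i
      simp only [Set.mem_setOf_eq, ← hγ]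
      constructor
      · intro h
        by_contra hc
        exact absurd h (not_lt.mpr (tyin_le_tyin (not_lt.mp hc)))
      · exact tyin_lt_tyin
    calc #↥(AA α) ≤ #↥(s '' {i | tyin i < c' α}) := Cardinal.mk_image_le
      _ ≤ #↥{i : lam.ord.ToType | tyin i < c' α} := Cardinal.mk_image_le
      _ = (tyin γ).card := by rw [h2, mk_seg]
      _ < lam := by rw [← Cardinal.lt_ord, hγ]; exact hc'lt α
  have hAAcover : ∀ a : ↥A, ∃ α₀, ∀ β, α₀ ≤ β → a.1 ∈ AA β := by
    intro a
    obtain ⟨i, rfl⟩ := hssurj a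
    obtain ⟨α₀, hα₀⟩ := hc'cof i
    exact ⟨α₀, fun β hβ => ⟨s i, ⟨i, lt_of_lt_of_le hα₀ (hc'mono hβ), rfl⟩, rfl⟩⟩
  -- choose separated pairs
  have hns : ∀ α, ∃ fgp : (X → ℝ) × (X → ℝ), fgp.1 ∈ Y ∧ fgp.2 ∈ Y ∧
      Set.EqOn fgp.1 fgp.2 (AA α) ∧ fgp.1 ≠ fgp.2 := by
    intro α
    have hsep' : ¬ (∀ f ∈ Y, ∀ g ∈ Y, Set.EqOn f g (AA α) → f = g) := by
      intro hsep'
      exact absurd (tweight_le_of_sep hYcomp hsep')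
        (not_le.mpr (max_lt (hAAcard α) hlam_big))
    by_contra hcon
    push_neg at hcon
    apply hsep'
    intro f hf g hg heq
    exact hcon (f, g) hf hg heq
  choose fgp hfY hgY hfg hne using hns
  set f : κ.ord.ToType → (X → ℝ) := fun α => (fgp α).1 with hf
  set g : κ.ord.ToType → (X → ℝ) := fun α => (fgp α).2 with hg
  set V : κ.ord.ToType → Set X := fun α => {x | f α x ≠ g α x} with hV
  have hVopen : ∀ α, IsOpen (V α) := fun α =>
    isOpen_ne_fun (hYcont _ (hfY α)) (hYcont _ (hgY α))
  have hVne : ∀ α, (V α).Nonempty := fun α => Function.ne_iff.mp (hne α)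
  set U : κ.ord.ToType → Set X := fun α => ⋃ β ∈ Set.Ici α, V β with hU
  have hUopen : ∀ α, IsOpen (U α) := fun α => isOpen_biUnion fun β _ => hVopen β
  have hUne : ∀ α, (U α).Nonempty := by
    intro α
    obtain ⟨x, hx⟩ := hVne α
    exact ⟨x, Set.mem_biUnion (Set.mem_Ici.mpr (le_refl α)) hx⟩
  have hUanti : Antitone U := fun a b hab =>
    Set.biUnion_subset_biUnion_left (Set.Ici_subset_Ici.mpr hab)
  -- the key emptiness property
  have hkey : ∀ B : Set κ.ord.ToType, #↥B = κ → ⋂ i ∈ B, U i = ∅ := by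
    intro B hB
    rw [Set.eq_empty_iff_forall_notMem]
    intro x hx
    simp only [Set.mem_iInter] at hx
    have hBunb : ∀ δ : κ.ord.ToType, ∃ i ∈ B, δ ≤ i := by
      by_contra hcon
      push_neg at hcon
      obtain ⟨δ, hδ⟩ := hcon
      have hsub : B ⊆ {i : κ.ord.ToType | i < δ} := fun i hi => hδ i hi
      have hle2 := Cardinal.mk_le_mk_of_subset hsub
      rw [hB] at hle2
      exact absurd (lt_of_le_of_lt hle2 (hseg δ)) (lt_irrefl κ)
    have hT : ∀ δ, ∃ β, δ ≤ β ∧ f β x ≠ g β x := by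
      intro δ
      obtain ⟨i, hiB, hδi⟩ := hBunb δ
      have hxU := hx i hiB
      simp only [hU, Set.mem_iUnion, Set.mem_Ici] at hxU
      obtain ⟨β, hβ, hxV⟩ := hxU
      exact ⟨β, le_trans hδi hβ, hxV⟩
    have hTn : ∃ n : ℕ, ∀ δ, ∃ β, δ ≤ β ∧ 1/((n : ℝ)+1) < |f β x - g β x| := by
      by_contra hcon
      push_neg at hcon
      choose δn hδn using hcon
      have hsup : (⨆ n : ℕ, tyin (δn n) + 1) < κ.ord := by
        apply Ordinal.iSup_lt_ord_lift
        · rw [hcof, Cardinal.mk_nat, Cardinal.lift_aleph0]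
          exact hunc
        · intro n
          rw [Ordinal.add_one_eq_succ]
          exact (Cardinal.isSuccLimit_ord hunc.le).succ_lt (tyin_lt_self _)
      obtain ⟨γ, hγ⟩ := exists_tyin_eq hsup
      obtain ⟨β, hγβ, hβx⟩ := hT γ
      obtain ⟨n, hn⟩ := exists_nat_one_div_lt (abs_pos.mpr (sub_ne_zero.mpr hβx))
      have hle3 : ¬ δn n ≤ β := fun hle4 => absurd hn (not_lt.mpr (hδn n β hle4))
      have h2 : tyin (δn n) + 1 ≤ tyin γ := by
        rw [hγ]
        exact Ordinal.le_iSup (fun n : ℕ => tyin (δn n) + 1) n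
      have h3 : tyin γ ≤ tyin β := tyin_le_tyin hγβ
      have h4 : tyin β < tyin (δn n) := tyin_lt_tyin (not_le.mp hle3)
      have h5 : tyin (δn n) < tyin (δn n) + 1 := by
        rw [Ordinal.add_one_eq_succ]; exact Order.lt_succ _
      exact absurd (((h5.trans_le h2).trans_le h3).trans h4) (lt_irrefl _)
    obtain ⟨n, hTn⟩ := hTn
    set ε : ℝ := 1/((n : ℝ)+1) with hε
    set Tn : Set κ.ord.ToType := {β | ε < |f β x - g β x|} with hTnset
    set F : Filter κ.ord.ToType := Filter.atTop ⊓ Filter.principal Tn with hF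
    haveI hFne : F.NeBot := by
      rw [hF, Filter.inf_principal_neBot_iff]
      intro Us hUs
      rw [Filter.mem_atTop_sets] at hUs
      obtain ⟨a, ha⟩ := hUs
      obtain ⟨β, hβ1, hβ2⟩ := hTn a
      exact ⟨β, ha β hβ1, hβ2⟩
    set h : κ.ord.ToType → (X → ℝ) × (X → ℝ) := fun β => (f β, g β) with hh
    have hle5 : Filter.map h F ≤ Filter.principal (Y ×ˢ Y) :=
      Filter.le_principal_iff.mpr (Filter.mem_map.mpr
        (Filter.univ_mem' fun β => Set.mem_prod.mpr ⟨hfY β, hgY β⟩))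
    obtain ⟨p, hpY, hcl⟩ := (hYcomp.prod hYcomp).exists_clusterPt hle5
    have hmemC : ∀ {C : Set ((X → ℝ) × (X → ℝ))}, IsClosed C → h ⁻¹' C ∈ F → p ∈ C := by
      intro C hC hCF
      have h1 : ClusterPt p (Filter.principal C) :=
        hcl.mono (Filter.le_principal_iff.mpr (Filter.mem_map.mpr hCF))
      rwa [← mem_closure_iff_clusterPt, hC.closure_eq] at h1
    have hpe : p.1 = p.2 := by
      apply hsepA p.1 hpY.1 p.2 hpY.2
      intro a ha
      obtain ⟨α₀, hα₀⟩ := hAAcover ⟨a, ha⟩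
      have hC : IsClosed {q : (X → ℝ) × (X → ℝ) | q.1 a = q.2 a} :=
        isClosed_eq ((continuous_apply a).comp continuous_fst)
          ((continuous_apply a).comp continuous_snd)
      exact hmemC hC (Filter.mem_of_superset
        (Filter.mem_inf_of_left (Filter.Ici_mem_atTop α₀))
        (fun β hβ => (hfg β) (hα₀ β hβ)))
    have hC1 : IsClosed {q : (X → ℝ) × (X → ℝ) | ε ≤ |q.1 x - q.2 x|} :=
      isClosed_le continuous_const ((((continuous_apply x).comp continuous_fst).sub
        ((continuous_apply x).comp continuous_snd)).abs)
    have hεle := hmemC hC1 (Filter.mem_of_superset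
      (show Tn ∈ F from Filter.mem_inf_of_right (Filter.mem_principal_self Tn))
      (by intro β hβ
          show ε ≤ |f β x - g β x|
          exact le_of_lt (show ε < |f β x - g β x| from hβ)))
    rw [Set.mem_setOf_eq, hpe] at hεle
    simp only [sub_self, abs_zero] at hεle
    have hεpos : 0 < ε := by rw [hε]; positivity
    linarith
  refine ⟨⟨U, fun i => ⟨hUopen i, hUne i⟩, hUanti, hkey⟩, ?_⟩
  intro hcal
  obtain ⟨B, hBcard, hBne⟩ := hcal κ.ord.ToType U
    (by rw [Cardinal.mk_toType, Cardinal.card_ord]) (fun i => ⟨hUopen i, hUne i⟩)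
  rw [hkey B hBcard] at hBne
  exact Set.not_nonempty_empty hBne
end

section
/- Assume that the first uncountable cardinal κ_i of countable cofinality satisfies κ_i > 2^{ℵ₁}. Let X be a topological space such that every regular cardinal κ with ℵ₁ ≤ κ ≤ 2^{ℵ₁} is a caliber of X. Then every compact subspace Y ⊆ C_p(X) is metrizable. -/
open Cardinal

universe u

open Cardinal Set Ordinal TopologicalSpace

private lemma sep_metrizable {X : Type u} [TopologicalSpace X] (Z : Set (X → ℝ))
    (hZ : IsCompact Z) (A : Set X) (hA : A.Countable)
    (hsep : ∀ f ∈ Z, ∀ g ∈ Z, (∀ x ∈ A, f x = g x) → f = g) :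
    TopologicalSpace.MetrizableSpace Z := by
  haveI : CompactSpace Z := isCompact_iff_compactSpace.mp hZ
  haveI : Countable A := hA.to_subtype
  have hcont : Continuous (fun (u : Z) (a : A) => (u : X → ℝ) a) := by
    refine continuous_pi fun a => ?_
    exact (continuous_apply (a : X)).comp continuous_subtype_val
  have hinj : Function.Injective (fun (u : Z) (a : A) => (u : X → ℝ) a) := by
    intro u v huv
    ext1
    refine hsep u u.2 v v.2 fun x hx => ?_
    exact congrFun huv ⟨x, hx⟩
  exact (hcont.isClosedEmbedding hinj).isEmbedding.metrizableSpace

private lemma exists_sep {X : Type u} [TopologicalSpace X] (Z : Set (X → ℝ))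
    (hZ : IsCompact Z) (D : Set (X → ℝ)) (hDZ : D ⊆ Z) (hDd : Z ⊆ closure D)
    (hcard : #D ≤ aleph 1) :
    ∃ A : Set X, (∀ f ∈ Z, ∀ g ∈ Z, (∀ x ∈ A, f x = g x) → f = g) ∧
      #A ≤ 2 ^ aleph 1 := by
  haveI : CompactSpace Z := isCompact_iff_compactSpace.mp hZ
  set D' : Set Z := Subtype.val ⁻¹' D with hD'def
  have hD'dense : Dense D' := by
    intro z
    rw [closure_subtype]
    have : Subtype.val '' D' = D := by
      rw [hD'def, Set.image_preimage_eq_inter_range, Subtype.range_coe]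
      exact Set.inter_eq_self_of_subset_left hDZ
    rw [this]
    exact hDd z.2
  -- index type
  set σ : Type u := Set D' × Set D' × ULift.{u} ℚ with hσdef
  set P : σ → Prop := fun t =>
    ∃ x : X,
      (∀ u ∈ interior (closure (Subtype.val '' t.1 : Set Z)), (u : X → ℝ) x < (t.2.2.down : ℝ)) ∧
      (∀ v ∈ interior (closure (Subtype.val '' t.2.1 : Set Z)), ((t.2.2.down : ℚ) : ℝ) < (v : X → ℝ) x)
    with hPdef
  set A : Set X := Set.range (fun t : {t : σ // P t} => Classical.choose t.2) with hAdef
  refine ⟨A, ?_, ?_⟩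
  · -- separation
    have key : ∀ u ∈ Z, ∀ v ∈ Z, (∀ x ∈ A, u x = v x) → ∀ x₀ : X, u x₀ < v x₀ → False := by
      intro u hu v hv huv x₀ hx₀
      obtain ⟨q, hq1, hq2⟩ := exists_rat_btwn hx₀
      set uu : Z := ⟨u, hu⟩
      set vv : Z := ⟨v, hv⟩
      have hGopen : ∀ (q : ℚ) (x : X), IsOpen {w : Z | (w : X → ℝ) x < (q : ℝ)} :=
        fun q x => isOpen_lt ((continuous_apply x).comp continuous_subtype_val) continuous_const
      have hGopen' : ∀ (q : ℚ) (x : X), IsOpen {w : Z | (q : ℝ) < (w : X → ℝ) x} :=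
        fun q x => isOpen_lt continuous_const ((continuous_apply x).comp continuous_subtype_val)
      -- regularity
      have reg : ∀ (G : Set Z) (w : Z), IsOpen G → w ∈ G →
          ∃ V : Set Z, IsOpen V ∧ w ∈ V ∧ closure V ⊆ G := by
        intro G w hG hw
        obtain ⟨t, ht, htc, hts⟩ := exists_mem_nhds_isClosed_subset (hG.mem_nhds hw)
        exact ⟨interior t, isOpen_interior, mem_interior_iff_mem_nhds.2 ht,
          (closure_minimal interior_subset htc).trans hts⟩
      obtain ⟨V₁, hV₁o, hV₁m, hV₁c⟩ := reg _ uu (hGopen q x₀) hq1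
      obtain ⟨V₂, hV₂o, hV₂m, hV₂c⟩ := reg _ vv (hGopen' q x₀) hq2
      set S : Set D' := {d : D' | (d : Z) ∈ V₁} with hSdef
      set T : Set D' := {d : D' | (d : Z) ∈ V₂} with hTdef
      have himg : ∀ (V : Set Z), Subtype.val '' {d : D' | (d : Z) ∈ V} = D' ∩ V := by
        intro V
        ext z
        simp only [Set.mem_image, Set.mem_setOf_eq, Set.mem_inter_iff]
        constructor
        · rintro ⟨d, hd, rfl⟩; exact ⟨d.2, hd⟩
        · rintro ⟨hz, hzv⟩; exact ⟨⟨z, hz⟩, hzv, rfl⟩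
      have hsub : ∀ (V G : Set Z), IsOpen V → closure V ⊆ G →
          V ⊆ interior (closure (D' ∩ V)) ∧ interior (closure (D' ∩ V)) ⊆ G := by
        intro V G hVo hVc
        constructor
        · refine fun z hz => ?_
          have : V ⊆ closure (D' ∩ V) := by
            have := hD'dense.open_subset_closure_inter hVo
            rwa [Set.inter_comm] at this
          exact (interior_maximal this hVo) hz
        · exact (interior_subset.trans ((closure_mono Set.inter_subset_right).trans hVc))
      have hP : P ⟨S, T, ⟨q⟩⟩ := by
        refine ⟨x₀, ?_, ?_⟩
        · intro w hw
          rw [himg V₁] at hw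
          exact ((hsub V₁ _ hV₁o hV₁c).2 hw : w ∈ _)
        · intro w hw
          rw [himg V₂] at hw
          exact ((hsub V₂ _ hV₂o hV₂c).2 hw : w ∈ _)
      set xA : X := Classical.choose hP with hxAdef
      have hxA : xA ∈ A := ⟨⟨⟨S, T, ⟨q⟩⟩, hP⟩, rfl⟩
      obtain ⟨h1, h2⟩ := Classical.choose_spec hP
      have hu' : (uu : X → ℝ) xA < (q : ℝ) := by
        refine h1 uu ?_
        rw [himg V₁]
        exact (hsub V₁ _ hV₁o hV₁c).1 hV₁m
      have hv' : ((q : ℚ) : ℝ) < (vv : X → ℝ) xA := by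
        refine h2 vv ?_
        rw [himg V₂]
        exact (hsub V₂ _ hV₂o hV₂c).1 hV₂m
      have heq := huv xA hxA
      have hu'' : u xA < (q : ℝ) := hu'
      have hv'' : (q : ℝ) < v xA := hv'
      rw [heq] at hu''
      exact lt_irrefl _ (lt_trans hu'' hv'')
    intro f hf g hg hfg
    by_contra hne
    obtain ⟨x₀, hx₀⟩ := Function.ne_iff.1 hne
    rcases lt_or_gt_of_ne hx₀ with h | h
    · exact key f hf g hg hfg x₀ h
    · exact key g hg f hf (fun x hx => (hfg x hx).symm) x₀ h
  · -- cardinality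
    have h1 : #A ≤ #σ := by
      refine (mk_range_le).trans ?_
      exact mk_subtype_le _
    have hD' : #D' ≤ aleph 1 :=
      (Cardinal.mk_preimage_of_injective _ _ Subtype.val_injective).trans hcard
    have hsetD' : #(Set D') ≤ 2 ^ aleph 1 := by
      rw [mk_set]
      exact power_le_power_left two_ne_zero hD'
    have hQ : #(ULift.{u} ℚ) = ℵ₀ := by simp
    have htwo : ℵ₀ ≤ 2 ^ aleph 1 :=
      le_trans aleph0_lt_aleph_one.le (cantor (aleph 1)).le
    have hσ : #σ = #(Set D') * (#(Set D') * #(ULift.{u} ℚ)) := by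
      rw [hσdef]
      simp [mk_prod]
    have hinner : #(Set D') * #(ULift.{u} ℚ) ≤ 2 ^ aleph 1 := by
      refine (mul_le_max _ _).trans ?_
      simp only [max_le_iff]
      exact ⟨⟨hsetD', by rw [hQ]; exact htwo⟩, htwo⟩
    have houter : #σ ≤ 2 ^ aleph 1 := by
      rw [hσ]
      refine (mul_le_max _ _).trans ?_
      simp only [max_le_iff]
      exact ⟨⟨hsetD', hinner⟩, htwo⟩
    exact h1.trans houter

private lemma exists_omega1_chain {α : Type u} [TopologicalSpace α] (Y : Set α)
    (h : ∀ S : Set α, S ⊆ Y → S.Countable → ∃ y ∈ Y, y ∉ closure S) :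
    ∃ W : Set α, W ⊆ Y ∧ #W ≤ aleph 1 ∧
      ∀ T : Set α, T ⊆ W → T.Countable → ¬ W ⊆ closure T := by
  classical
  haveI iwo : IsWellOrder ((aleph 1 : Cardinal.{u}).ord.ToType) (· < ·) := isWellOrder_lt
  have hcard_lt : ∀ i : (aleph 1 : Cardinal.{u}).ord.ToType,
      #{j : (aleph 1 : Cardinal.{u}).ord.ToType | j < i} < aleph 1 := by
    intro i
    have h1 : typein (· < ·) i < type ((· < ·) : (aleph 1 : Cardinal.{u}).ord.ToType → _ → Prop) :=
      typein_lt_type _ i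
    rw [type_toType] at h1
    have h2 := Cardinal.lt_ord.1 h1
    exact h2
  have hctble : ∀ i : (aleph 1 : Cardinal.{u}).ord.ToType,
      Countable {j : (aleph 1 : Cardinal.{u}).ord.ToType // j < i} := by
    intro i
    have := hcard_lt i
    rw [← countable_iff_lt_aleph_one] at this
    exact this.to_subtype
  have wf : WellFounded ((· < ·) : (aleph 1 : Cardinal.{u}).ord.ToType → _ → Prop) := iwo.wf
  have hcnt : ∀ (i : (aleph 1 : Cardinal.{u}).ord.ToType)
      (rec : ∀ j, j < i → α), ({z | ∃ j, ∃ hj : j < i, rec j hj = z} ∩ Y).Countable := by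
    intro i rec
    refine Set.Countable.mono inter_subset_left ?_
    have : {z | ∃ j, ∃ hj : j < i, rec j hj = z} =
        Set.range (fun j : {j : (aleph 1 : Cardinal.{u}).ord.ToType // j < i} => rec j.1 j.2) := by
      ext z
      constructor
      · rintro ⟨j, hj, rfl⟩; exact ⟨⟨j, hj⟩, rfl⟩
      · rintro ⟨⟨j, hj⟩, rfl⟩; exact ⟨j, hj, rfl⟩
    rw [this]
    haveI := hctble i
    exact countable_range _
  set y : (aleph 1 : Cardinal.{u}).ord.ToType → α := wf.fix (fun i rec =>
    Classical.choose (h ({z | ∃ j, ∃ hj : j < i, rec j hj = z} ∩ Y)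
      inter_subset_right (hcnt i rec))) with hydef
  have hyspec : ∀ i, y i ∈ Y ∧ y i ∉ closure ({z | ∃ j, ∃ hj : j < i, y j = z} ∩ Y) := by
    intro i
    have hfix : y i = Classical.choose (h ({z | ∃ j, ∃ hj : j < i, y j = z} ∩ Y)
        inter_subset_right (hcnt i (fun j _ => y j))) := by
      rw [hydef]
      rw [WellFounded.fix_eq]
    have := Classical.choose_spec (h ({z | ∃ j, ∃ hj : j < i, y j = z} ∩ Y)
        inter_subset_right (hcnt i (fun j _ => y j)))
    rw [← hfix] at this
    exact ⟨this.1, this.2⟩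
  have hYmem : ∀ i, y i ∈ Y := fun i => (hyspec i).1
  have hprev : ∀ i, {z | ∃ j, ∃ hj : j < i, y j = z} ∩ Y = {z | ∃ j, ∃ hj : j < i, y j = z} := by
    intro i
    refine Set.inter_eq_self_of_subset_left ?_
    rintro z ⟨j, hj, rfl⟩
    exact hYmem j
  have hnotcl : ∀ i, y i ∉ closure {z | ∃ j, ∃ hj : j < i, y j = z} := by
    intro i
    have := (hyspec i).2
    rwa [hprev] at this
  have hyinj : Function.Injective y := by
    intro i j hij
    by_contra hne
    rcases lt_or_gt_of_ne hne with hlt | hlt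
    · exact hnotcl j (subset_closure ⟨i, hlt, hij⟩)
    · exact hnotcl i (subset_closure ⟨j, hlt, hij.symm⟩)
  refine ⟨Set.range y, ?_, ?_, ?_⟩
  · rintro z ⟨i, rfl⟩; exact hYmem i
  · refine (mk_range_le).trans_eq ?_
    rw [mk_toType, card_ord]
  · intro T hTW hTc hWT
    -- indices of T
    set J : Set ((aleph 1 : Cardinal.{u}).ord.ToType) := y ⁻¹' T with hJdef
    have hJc : J.Countable := by
      have : #J ≤ #T := mk_preimage_of_injective _ _ hyinj
      exact (countable_iff_lt_aleph_one T).1 hTc |> fun hT =>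
        (countable_iff_lt_aleph_one J).2 (lt_of_le_of_lt this hT)
    haveI : Countable J := hJc.to_subtype
    -- bound J
    have hlim : Order.IsSuccLimit ((aleph 1 : Cardinal.{u}).ord) := isSuccLimit_ord aleph0_lt_aleph_one.le
    have hsup : (⨆ j : J, Order.succ (typein ((· < ·) : (aleph 1 : Cardinal.{u}).ord.ToType → _ → Prop) j.1)) < (aleph 1 : Cardinal.{u}).ord := by
      refine Ordinal.iSup_lt_ord ?_ ?_
      · rw [Cardinal.isRegular_aleph_one.cof_eq]
        exact (mk_le_aleph0).trans_lt aleph0_lt_aleph_one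
      · intro j
        have htl := typein_lt_type ((· < ·) : (aleph 1 : Cardinal.{u}).ord.ToType → _ → Prop) j.1
        rw [type_toType] at htl
        exact hlim.succ_lt htl
    obtain ⟨i0, hi0⟩ : ∃ i0 : (aleph 1 : Cardinal.{u}).ord.ToType,
        typein ((· < ·) : (aleph 1 : Cardinal.{u}).ord.ToType → _ → Prop) i0 =
          (⨆ j : J, Order.succ (typein ((· < ·) : (aleph 1 : Cardinal.{u}).ord.ToType → _ → Prop) j.1)) :=
      ⟨enum _ ⟨_, by rw [type_toType]; exact hsup⟩, typein_enum _ _⟩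
    have hbound : ∀ j ∈ J, j < i0 := by
      intro j hj
      have h1 : typein ((· < ·) : (aleph 1 : Cardinal.{u}).ord.ToType → _ → Prop) j <
          typein ((· < ·) : (aleph 1 : Cardinal.{u}).ord.ToType → _ → Prop) i0 := by
        rw [hi0]
        exact lt_of_lt_of_le (Order.lt_succ _) (le_ciSup (Ordinal.bddAbove_range _) (⟨j, hj⟩ : ↥J))
      exact (typein_lt_typein _).1 h1
    have hTsub : T ⊆ {z | ∃ j, ∃ hj : j < i0, y j = z} := by
      intro t ht
      obtain ⟨j, rfl⟩ := hTW ht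
      exact ⟨j, hbound j ht, rfl⟩
    exact hnotcl i0 ((closure_mono hTsub) (hWT ⟨i0, rfl⟩))

private lemma exists_small_dense_nonmetrizable {α : Type u} [TopologicalSpace α] [T2Space α]
    (Y : Set α) (hYcomp : IsCompact Y) (hnm : ¬ MetrizableSpace Y) :
    ∃ Z D : Set α, Z ⊆ Y ∧ IsCompact Z ∧ ¬ MetrizableSpace Z ∧
      D ⊆ Z ∧ Z ⊆ closure D ∧ #D ≤ aleph 1 := by
  by_cases hsep : ∃ S : Set α, S ⊆ Y ∧ S.Countable ∧ Y ⊆ closure S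
  · obtain ⟨S, hSY, hSc, hScl⟩ := hsep
    haveI := hSc.to_subtype
    exact ⟨Y, S, le_refl _, hYcomp, hnm, hSY, hScl,
      (Cardinal.mk_le_aleph0).trans aleph0_lt_aleph_one.le⟩
  · push_neg at hsep
    have h : ∀ S : Set α, S ⊆ Y → S.Countable → ∃ y ∈ Y, y ∉ closure S := by
      intro S hSY hSc
      have := hsep S hSY hSc
      obtain ⟨y, hy1, hy2⟩ := Set.not_subset.1 this
      exact ⟨y, hy1, hy2⟩
    obtain ⟨W, hWY, hWcard, hWnd⟩ := exists_omega1_chain Y h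
    have hZY : closure W ⊆ Y := closure_minimal hWY hYcomp.isClosed
    have hZcomp : IsCompact (closure W) := hYcomp.of_isClosed_subset isClosed_closure hZY
    refine ⟨closure W, W, hZY, hZcomp, ?_, subset_closure, subset_refl _, hWcard⟩
    intro hm
    haveI : CompactSpace (closure W) := isCompact_iff_compactSpace.mp hZcomp
    haveI := hm
    letI : MetricSpace (closure W) := TopologicalSpace.metrizableSpaceMetric _
    haveI : SeparableSpace (closure W) := isSeparable_univ_iff.1 (isCompact_univ.isSeparable)
    haveI : SecondCountableTopology (closure W) := UniformSpace.secondCountable_of_separable _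
    haveI : SecondCountableTopology W :=
      (Topology.IsEmbedding.inclusion (subset_closure : W ⊆ closure W)).secondCountableTopology
    obtain ⟨s, hsc, hsd⟩ := TopologicalSpace.exists_countable_dense W
    refine hWnd (Subtype.val '' s) (by rintro t ⟨w, _, rfl⟩; exact w.2) (hsc.image _) ?_
    intro w hw
    have := hsd ⟨w, hw⟩
    exact closure_subtype.1 this

/-- Suppose the first uncountable cardinal of countable cofinality is greater than
`2 ^ ℵ₁` (equivalently, every uncountable cardinal of countable cofinality exceeds
`2 ^ ℵ₁`). If every regular cardinal `κ` with `ℵ₁ ≤ κ ≤ 2 ^ ℵ₁` is a caliber of `X`,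
then every compact `Y ⊆ C_p(X)` is metrizable. -/
theorem metrizable_compact_subset_Cp_of_calibers
    (hbig : ∀ κ : Cardinal.{u}, Cardinal.aleph0 < κ → κ.ord.cof = Cardinal.aleph0 →
      2 ^ Cardinal.aleph 1 < κ)
    (X : Type u) [TopologicalSpace X]
    (hcal : ∀ κ : Cardinal.{u}, Cardinal.aleph 1 ≤ κ → κ ≤ 2 ^ Cardinal.aleph 1 →
      κ.IsRegular → IsCaliber X κ)
    (Y : Set (X → ℝ)) (hYcont : ∀ f ∈ Y, Continuous f) (hYcomp : IsCompact Y) :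
    TopologicalSpace.MetrizableSpace Y := by
  classical
  by_contra hnm
  obtain ⟨Z, D, hZY, hZcomp, hZnm, hDZ, hDd, hDcard⟩ :=
    exists_small_dense_nonmetrizable Y hYcomp hnm
  obtain ⟨A0, hA0sep, hA0card⟩ := exists_sep Z hZcomp D hDZ hDd hDcard
  set 𝒞 : Set Cardinal.{u} :=
    {c | ∃ A : Set X, (∀ f ∈ Z, ∀ g ∈ Z, (∀ x ∈ A, f x = g x) → f = g) ∧ #A = c} with h𝒞def
  have h𝒞ne : 𝒞.Nonempty := ⟨#A0, A0, hA0sep, rfl⟩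
  set μ := sInf 𝒞 with hμdef
  have hμmem : μ ∈ 𝒞 := csInf_mem h𝒞ne
  obtain ⟨A, hAsep, hAcard⟩ := hμmem
  have hμmin : ∀ A' : Set X, (∀ f ∈ Z, ∀ g ∈ Z, (∀ x ∈ A', f x = g x) → f = g) → μ ≤ #A' :=
    fun A' hA' => csInf_le (OrderBot.bddBelow _) ⟨A', hA', rfl⟩
  have hμle : μ ≤ 2 ^ aleph 1 := (hμmin A0 hA0sep).trans hA0card
  have hμge : (aleph 1 : Cardinal.{u}) ≤ μ := by
    by_contra hlt
    push_neg at hlt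
    have hAc : A.Countable := (countable_iff_lt_aleph_one A).2 (hAcard ▸ hlt)
    exact hZnm (sep_metrizable Z hZcomp A hAc hAsep)
  have hμ0 : ℵ₀ < μ := aleph0_lt_aleph_one.trans_le hμge
  set lam := (μ.ord).cof with hlamdef
  have hlamreg : lam.IsRegular := isRegular_cof (isSuccLimit_ord hμ0.le)
  have hlamne : lam ≠ ℵ₀ := by
    intro h0
    exact absurd hμle (not_le.2 (hbig μ hμ0 h0))
  have hlam0 : ℵ₀ < lam := lt_of_le_of_ne hlamreg.aleph0_le (Ne.symm hlamne)
  have hlam1 : (aleph 1 : Cardinal.{u}) ≤ lam := by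
    have h1 : aleph 1 = Order.succ (aleph 0) := by
      rw [← aleph_succ]
      norm_num
    rw [h1]
    refine Order.succ_le_of_lt ?_
    rwa [aleph_zero]
  have hlamμ : lam ≤ μ := cof_ord_le μ
  have hcalib := hcal lam hlam1 (hlamμ.trans hμle) hlamreg
  -- index types
  haveI iwoγ : IsWellOrder ((lam.ord).ToType) (· < ·) := isWellOrder_lt
  haveI iwoμ : IsWellOrder ((μ.ord).ToType) (· < ·) := isWellOrder_lt
  have hAeq : #A = #((μ.ord).ToType) := by rw [mk_toType, card_ord, hAcard]
  obtain ⟨e⟩ : Nonempty (A ≃ (μ.ord).ToType) := Cardinal.eq.1 hAeq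
  obtain ⟨fo, hfo⟩ := Ordinal.exists_fundamental_sequence μ.ord
  have hoi : ∀ i : (lam.ord).ToType,
      typein ((· < ·) : (lam.ord).ToType → _ → Prop) i < (μ.ord).cof.ord := by
    intro i
    have := typein_lt_type ((· < ·) : (lam.ord).ToType → _ → Prop) i
    rwa [type_toType] at this
  set F : (lam.ord).ToType → Ordinal.{u} :=
    fun i => fo (typein ((· < ·) : (lam.ord).ToType → _ → Prop) i) (hoi i) with hFdef
  have hFlt : ∀ i, F i < μ.ord := fun i => hfo.lt (hoi i)
  have hFmono : ∀ i j : (lam.ord).ToType, i ≤ j → F i ≤ F j := by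
    intro i j hij
    exact hfo.monotone _ _ ((typein_le_typein _).2 (not_lt.2 hij))
  set Asub : (lam.ord).ToType → Set A :=
    fun i => {a | typein ((· < ·) : (μ.ord).ToType → _ → Prop) (e a) < F i} with hAsubdef
  have hAsubcard : ∀ i, #(Asub i) < μ := by
    intro i
    have hcc : F i < type ((· < ·) : (μ.ord).ToType → _ → Prop) := by
      rw [type_toType]; exact hFlt i
    set c : (μ.ord).ToType := enum _ ⟨F i, hcc⟩ with hcdef
    have h1 : #(Asub i) ≤ #{b : (μ.ord).ToType // b < c} := by
      refine mk_le_of_injective (f := fun a : Asub i => (⟨e a.1, ?_⟩ : {b // b < c})) ?_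
      · have := a.2
        rw [← typein_lt_typein ((· < ·) : (μ.ord).ToType → _ → Prop)]
        rw [hcdef, typein_enum]
        exact a.2
      · intro a b hab
        have : (e a.1 : (μ.ord).ToType) = e b.1 := congrArg Subtype.val hab
        exact Subtype.ext (e.injective this)
    have h2 : #{b : (μ.ord).ToType // b < c} = (typein ((· < ·) : (μ.ord).ToType → _ → Prop) c).card :=
      card_typein c
    have h3 : (typein ((· < ·) : (μ.ord).ToType → _ → Prop) c).card = (F i).card := by
      rw [hcdef, typein_enum]
    have h4 : (F i).card < μ := Cardinal.lt_ord.1 (hFlt i)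
    calc #(Asub i) ≤ _ := h1
      _ = _ := h2
      _ = _ := h3
      _ < μ := h4
  have hAsubmono : ∀ i j, i ≤ j → Asub i ⊆ Asub j := by
    intro i j hij a ha
    simp only [hAsubdef, Set.mem_setOf_eq] at ha ⊢
    exact lt_of_lt_of_le ha (hFmono i j hij)
  have hAsubcover : ∀ a : A, ∃ i, a ∈ Asub i := by
    intro a
    have ho' : typein ((· < ·) : (μ.ord).ToType → _ → Prop) (e a) < μ.ord := by
      have := typein_lt_type ((· < ·) : (μ.ord).ToType → _ → Prop) (e a)
      rwa [type_toType] at this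
    have ho'' : typein ((· < ·) : (μ.ord).ToType → _ → Prop) (e a) < blsub.{u,u} _ fo :=
      lt_of_lt_of_eq ho' hfo.blsub_eq.symm
    obtain ⟨b, hb, hle⟩ := (lt_blsub_iff).1 ho''
    have hlim : Order.IsSuccLimit (μ.ord.cof.ord) := isSuccLimit_ord hlamreg.aleph0_le
    have hb' : Order.succ b < μ.ord.cof.ord := hlim.succ_lt hb
    have hbb : Order.succ b < type ((· < ·) : (lam.ord).ToType → _ → Prop) := by
      rw [type_toType]; exact hb'
    refine ⟨enum _ ⟨Order.succ b, hbb⟩, ?_⟩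
    show typein _ (e a) < F _
    rw [hFdef]
    simp only [typein_enum]
    exact lt_of_le_of_lt hle (hfo.strict_mono hb hb' (Order.lt_succ b))
  have hnotsep : ∀ i, ¬ (∀ f ∈ Z, ∀ g ∈ Z,
      (∀ x ∈ Subtype.val '' (Asub i), f x = g x) → f = g) := by
    intro i hs
    have := hμmin _ hs
    rw [mk_image_eq Subtype.val_injective] at this
    exact absurd this (not_le.2 (hAsubcard i))
  have hexists : ∀ i, ∃ f, f ∈ Z ∧ ∃ g, g ∈ Z ∧
      (∀ x ∈ Subtype.val '' (Asub i), f x = g x) ∧ f ≠ g := by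
    intro i
    have := hnotsep i
    push_neg at this
    obtain ⟨f, hf, g, hg, hagr, hne⟩ := this
    exact ⟨f, hf, g, hg, hagr, hne⟩
  choose f hfZ g hgZ hagr hne using hexists
  have hx0 : ∀ i, ∃ x, f i x ≠ g i x := fun i => Function.ne_iff.1 (hne i)
  choose x0 hx0spec using hx0
  have hn : ∀ i, ∃ nn : ℕ, 1 / (nn + 1 : ℝ) < |f i (x0 i) - g i (x0 i)| :=
    fun i => exists_nat_one_div_lt (abs_pos.2 (sub_ne_zero.2 (hx0spec i)))
  choose n hnspec using hn
  set UU : (lam.ord).ToType → Set X :=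
    fun i => {x | 1 / (n i + 1 : ℝ) < |f i x - g i x|} with hUUdef
  have hUopen : ∀ i, IsOpen (UU i) := by
    intro i
    exact isOpen_lt continuous_const
      (((hYcont _ (hZY (hfZ i))).sub (hYcont _ (hZY (hgZ i)))).abs)
  have hUne : ∀ i, (UU i).Nonempty := fun i => ⟨x0 i, hnspec i⟩
  -- pigeonhole
  have hγcard : #((lam.ord).ToType) = lam := by rw [mk_toType, card_ord]
  obtain ⟨a, ha⟩ := Cardinal.infinite_pigeonhole
    (fun i : (lam.ord).ToType => (⟨n i⟩ : ULift.{u} ℕ))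
    (by rw [hγcard]; exact hlamreg.aleph0_le)
    (by
      rw [hγcard, hlamreg.cof_eq]
      simpa using hlam0)
  obtain ⟨B, hBcard, hBx⟩ := hcalib
    ((fun i : (lam.ord).ToType => (⟨n i⟩ : ULift.{u} ℕ)) ⁻¹' {a})
    (fun p => UU p.1)
    (by rw [ha, hγcard])
    (fun p => ⟨hUopen _, hUne _⟩)
  obtain ⟨x, hx⟩ := hBx
  set B' : Set ((lam.ord).ToType) := Subtype.val '' B with hB'def
  have hB'card : #B' = lam := by
    rw [hB'def, mk_image_eq Subtype.val_injective, hBcard]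
  have hB'n : ∀ i ∈ B', n i = a.down := by
    rintro i ⟨p, hp, rfl⟩
    have : (⟨n p.1⟩ : ULift.{u} ℕ) = a := p.2
    exact congrArg ULift.down this
  have hB'x : ∀ i ∈ B', x ∈ UU i := by
    rintro i ⟨p, hp, rfl⟩
    exact Set.mem_iInter₂.1 hx p hp
  have hB'unbdd : ∀ i0 : (lam.ord).ToType, ∃ i ∈ B', i0 < i := by
    intro i0
    by_contra hno
    push_neg at hno
    have hsubset : B' ⊆ Set.Iic i0 := fun i hi => hno i hi
    have h1 : #(Set.Iio i0) < lam := by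
      have := typein_lt_type ((· < ·) : (lam.ord).ToType → _ → Prop) i0
      rw [type_toType] at this
      exact Cardinal.lt_ord.1 this
    have h2 : #(Set.Iic i0) < lam := by
      rw [← Set.Iio_insert]
      refine lt_of_le_of_lt (Cardinal.mk_insert_le) ?_
      exact Cardinal.add_lt_of_lt hlamreg.aleph0_le h1 (one_lt_aleph0.trans hlam0)
    have h3 : lam ≤ #(Set.Iic i0) :=
      hB'card.symm.trans_le (Cardinal.mk_le_mk_of_subset hsubset)
    exact absurd h3 (not_le.2 h2)
  -- the filter
  haveI : Nonempty ((lam.ord).ToType) :=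
    toType_nonempty_iff_ne_zero.2 (isSuccLimit_ord hlamreg.aleph0_le).pos.ne'
  set L : Filter ((lam.ord).ToType) := Filter.atTop ⊓ Filter.principal B' with hLdef
  haveI hLne : L.NeBot := by
    refine Filter.inf_principal_neBot_iff.2 ?_
    intro V hV
    obtain ⟨i0, hi0⟩ := Filter.mem_atTop_sets.1 hV
    obtain ⟨i, hiB, hii⟩ := hB'unbdd i0
    exact ⟨i, hi0 i hii.le, hiB⟩
  set ψ : (lam.ord).ToType → (X → ℝ) × (X → ℝ) := fun i => (f i, g i) with hψdef
  haveI : (Filter.map ψ L).NeBot := Filter.map_neBot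
  have hmapZ : Filter.map ψ L ≤ Filter.principal (Z ×ˢ Z) := by
    refine Filter.le_principal_iff.2 ?_
    refine Filter.mem_map.2 ?_
    refine Filter.univ_mem' ?_
    intro i
    exact Set.mk_mem_prod (hfZ i) (hgZ i)
  obtain ⟨p, hpZZ, hpcl⟩ := (hZcomp.prod hZcomp) hmapZ
  have hclosedmem : ∀ C : Set ((X → ℝ) × (X → ℝ)), IsClosed C →
      {i | ψ i ∈ C} ∈ L → p ∈ C := by
    intro C hC hmem
    have h1 : C ∈ Filter.map ψ L := Filter.mem_map.2 hmem
    have h2 : ClusterPt p (Filter.principal C) := hpcl.mono (Filter.le_principal_iff.2 h1)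
    rw [← hC.closure_eq]
    exact mem_closure_iff_clusterPt.2 h2
  have hclaim1 : ∀ xx ∈ A, p.1 xx = p.2 xx := by
    intro xx hxx
    obtain ⟨i0, hi0⟩ := hAsubcover ⟨xx, hxx⟩
    refine hclosedmem {q | q.1 xx = q.2 xx}
      (isClosed_eq ((continuous_apply xx).comp continuous_fst)
        ((continuous_apply xx).comp continuous_snd)) ?_
    refine Filter.mem_inf_of_left (Filter.mem_of_superset (Filter.Ici_mem_atTop i0) ?_)
    intro i hi
    exact hagr i xx ⟨⟨xx, hxx⟩, hAsubmono i0 i hi hi0, rfl⟩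
  have hpeq : p.1 = p.2 := hAsep p.1 hpZZ.1 p.2 hpZZ.2 hclaim1
  have hclaim2 : p ∈ {q : (X → ℝ) × (X → ℝ) | 1 / (a.down + 1 : ℝ) ≤ |q.1 x - q.2 x|} := by
    refine hclosedmem _ (isClosed_le continuous_const
      ((((continuous_apply x).comp continuous_fst).sub
        ((continuous_apply x).comp continuous_snd)).abs)) ?_
    refine Filter.mem_inf_of_right (Filter.mem_of_superset (Filter.mem_principal_self B') ?_)
    intro i hi
    have h1 := hB'x i hi
    have h2 := hB'n i hi
    show 1 / (a.down + 1 : ℝ) ≤ |f i x - g i x|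
    rw [← h2]
    exact (h1 : _ < _).le
  simp only [Set.mem_setOf_eq] at hclaim2
  rw [hpeq] at hclaim2
  have habs : |p.2 x - p.2 x| = (0:ℝ) := by norm_num
  rw [habs] at hclaim2
  have : (0 : ℝ) < 1 / (a.down + 1 : ℝ) := by positivity
  linarith
end
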